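/- Let Ω be a finite set, μ a strictly positive pmf on Ω, ρ : Ω → ℝ, Φ : Ω → S, and Ψ : Ω → ℝ a function factoring through Φ (Ψ = h ∘ Φ). Define the weighted objective L(g) = ∑_ω μ(ω)·((g(Φ(ω)) − ρ(ω))·Ψ(ω))². Then the conditional expectation g*(s) = E_μ[ρ·1{Φ=s}]/P_μ(Φ=s) (on s with positive probability, arbitrary elsewhere) is a global minimizer of L. -/

import Mathlib

theorem weighted_regression_condexp_optimal
    {Ω S : Type*} [Fintype Ω] [Fintype S] [DecidableEq S]
    (μ : Ω → ℝ) (hμ0 : ∀ ω, 0 < μ ω) (hμ1 : ∑ ω, μ ω = 1)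
    (ρ : Ω → ℝ) (Φ : Ω → S)
    (Ψ : Ω → ℝ) (h : S → ℝ) (hΨ : ∀ ω, Ψ ω = h (Φ ω))
    (gstar : S → ℝ)
    (hgstar : ∀ s, gstar s = (∑ ω, if Φ ω = s then μ ω * ρ ω else 0)
                              / (∑ ω, if Φ ω = s then μ ω else 0)) :
    ∀ g : S → ℝ,
      ∑ ω, μ ω * ((gstar (Φ ω) - ρ ω) * Ψ ω) ^ 2
        ≤ ∑ ω, μ ω * ((g (Φ ω) - ρ ω) * Ψ ω) ^ 2 := by
  intro g
  -- rewrite each total sum as a sum over fibers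
  have hsplit : ∀ k : S → ℝ,
      ∑ ω, μ ω * ((k (Φ ω) - ρ ω) * Ψ ω) ^ 2
        = ∑ s, ∑ ω, if Φ ω = s then μ ω * ((k s - ρ ω) * h s) ^ 2 else 0 := by
    intro k
    rw [Finset.sum_comm]
    refine Finset.sum_congr rfl fun ω _ => ?_
    rw [Finset.sum_ite_eq Finset.univ (Φ ω)
      (fun s => μ ω * ((k s - ρ ω) * h s) ^ 2)]
    simp [hΨ]
  rw [hsplit gstar, hsplit g]
  refine Finset.sum_le_sum fun s _ => ?_
  set A : ℝ := ∑ ω, if Φ ω = s then μ ω else 0 with hA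
  set B : ℝ := ∑ ω, if Φ ω = s then μ ω * ρ ω else 0 with hB
  set C : ℝ := ∑ ω, if Φ ω = s then μ ω * ρ ω ^ 2 else 0 with hC
  have expand : ∀ c : ℝ,
      ∑ ω, (if Φ ω = s then μ ω * ((c - ρ ω) * h s) ^ 2 else 0)
        = (h s) ^ 2 * (c ^ 2 * A - 2 * c * B + C) := by
    intro c
    have hpt : ∀ ω, (if Φ ω = s then μ ω * ((c - ρ ω) * h s) ^ 2 else 0)
        = (h s) ^ 2 * (c ^ 2 * (if Φ ω = s then μ ω else 0)
            - 2 * c * (if Φ ω = s then μ ω * ρ ω else 0)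
            + (if Φ ω = s then μ ω * ρ ω ^ 2 else 0)) := by
      intro ω
      by_cases hω : Φ ω = s <;> simp [hω] <;> ring
    simp only [hpt]
    rw [← Finset.mul_sum]
    congr 1
    rw [Finset.sum_add_distrib, Finset.sum_sub_distrib, ← Finset.mul_sum,
      ← Finset.mul_sum, hA, hB, hC]
  rw [expand (gstar s), expand (g s)]
  have hH : (0:ℝ) ≤ (h s) ^ 2 := sq_nonneg _
  have hAnn : 0 ≤ A := by
    rw [hA]
    exact Finset.sum_nonneg fun ω _ => by split <;> simp [(hμ0 _).le]
  rcases eq_or_lt_of_le hAnn with hA0 | hApos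
  · -- fiber is empty, so B = 0 as well
    have hempty : ∀ ω, Φ ω ≠ s := by
      intro ω hωs
      have hle : (if Φ ω = s then μ ω else 0) ≤ A := by
        rw [hA]
        exact Finset.single_le_sum (f := fun ω => if Φ ω = s then μ ω else 0)
          (fun ω _ => by split <;> simp [(hμ0 _).le]) (Finset.mem_univ ω)
      rw [if_pos hωs, ← hA0] at hle
      exact absurd hle (not_le.mpr (hμ0 ω))
    have hB0 : B = 0 := by
      rw [hB]
      exact Finset.sum_eq_zero fun ω _ => if_neg (hempty ω)
    rw [← hA0, hB0]
    simp
  · have hgs : gstar s = B / A := by rw [hgstar s, ← hA, ← hB]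
    have hA' : A ≠ 0 := ne_of_gt hApos
    have key : gstar s ^ 2 * A - 2 * gstar s * B + C
        ≤ g s ^ 2 * A - 2 * g s * B + C := by
      rw [hgs]
      have h2 : (B / A) ^ 2 * A - 2 * (B / A) * B + C = C - B ^ 2 / A := by
        field_simp; ring
      rw [h2]
      have h3 : 0 ≤ (A * g s - B) ^ 2 / A := div_nonneg (sq_nonneg _) hApos.le
      have h4 : (A * g s - B) ^ 2 / A = g s ^ 2 * A - 2 * g s * B + B ^ 2 / A := by
        field_simp; ring
      linarith
    exact mul_le_mul_of_nonneg_left key hH
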